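/- Binomial–double-factorial inequality: for positive integers n, N, N_2 with 2 ≤ N_2 ≤ N, 2N − 2N_2 ≥ 0 and N_2 ≥ 2N − 2n, it holds that (1/2^{N_2})·C(2n, N_2)·C(2n − N_2, 2N − 2N_2) ≤ C(2N, N_2)·(2n)^{2N − N_2}·N^{N_2}/(2N)!. -/

import Mathlib

lemma bdfi_nat (n N N₂ : ℕ) (hN₂N : N₂ ≤ N) (hlow : 2 * N ≤ 2 * n + N₂) :
    Nat.choose (2 * n) N₂ * Nat.choose (2 * n - N₂) (2 * N - 2 * N₂) * (2 * N).factorial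
      ≤ Nat.choose (2 * N) N₂ * (2 * n) ^ (2 * N - N₂) * (2 * N) ^ N₂ := by
  have hK : 2 * N - N₂ ≤ 2 * n := by omega
  have hsk : N₂ ≤ 2 * N - N₂ := by omega
  have hid := Nat.choose_mul (n := 2 * n) (k := 2 * N - N₂) (s := N₂) hsk
  have h2 : 2 * N - N₂ - N₂ = 2 * N - 2 * N₂ := by omega
  rw [h2] at hid
  rw [← hid]
  have hfact : (2 * N).factorial
      = Nat.choose (2 * N) N₂ * N₂.factorial * (2 * N - N₂).factorial :=
    (Nat.choose_mul_factorial_mul_factorial (by omega)).symm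
  rw [hfact]
  have hA : Nat.choose (2 * n) (2 * N - N₂) * (2 * N - N₂).factorial
      ≤ (2 * n) ^ (2 * N - N₂) := by
    rw [Nat.mul_comm, ← Nat.descFactorial_eq_factorial_mul_choose]
    exact Nat.descFactorial_le_pow _ _
  have hB : Nat.choose (2 * N - N₂) N₂ * N₂.factorial ≤ (2 * N) ^ N₂ := by
    rw [Nat.mul_comm, ← Nat.descFactorial_eq_factorial_mul_choose]
    exact le_trans (Nat.descFactorial_le_pow _ _) (Nat.pow_le_pow_left (by omega) _)
  calc Nat.choose (2 * n) (2 * N - N₂) * Nat.choose (2 * N - N₂) N₂ *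
        (Nat.choose (2 * N) N₂ * N₂.factorial * (2 * N - N₂).factorial)
      = Nat.choose (2 * N) N₂ *
          (Nat.choose (2 * n) (2 * N - N₂) * (2 * N - N₂).factorial) *
          (Nat.choose (2 * N - N₂) N₂ * N₂.factorial) := by ring
    _ ≤ Nat.choose (2 * N) N₂ * (2 * n) ^ (2 * N - N₂) * (2 * N) ^ N₂ := by
        exact Nat.mul_le_mul (Nat.mul_le_mul_left _ hA) hB

/-- Binomial–double-factorial inequality: for positive integers `n, N, N₂` with
`2 ≤ N₂ ≤ N` and `N₂ ≥ 2N − 2n`, it holds that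
`(1/2^{N₂})·C(2n,N₂)·C(2n−N₂, 2N−2N₂) ≤ C(2N,N₂)·(2n)^{2N−N₂}·N^{N₂}/(2N)!`. -/
theorem binomial_double_factorial_inequality (n N N₂ : ℕ) (hn : 0 < n) (hN : 0 < N)
    (hN₂ : 2 ≤ N₂) (hN₂N : N₂ ≤ N) (hlow : 2 * N ≤ 2 * n + N₂) :
    ((Nat.choose (2 * n) N₂ : ℝ) * (Nat.choose (2 * n - N₂) (2 * N - 2 * N₂) : ℝ))
        / 2 ^ N₂
      ≤ (Nat.choose (2 * N) N₂ : ℝ) * (2 * n : ℝ) ^ (2 * N - N₂) * (N : ℝ) ^ N₂ /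
        ((2 * N).factorial : ℝ) := by
  rw [div_le_div_iff₀ (by positivity) (by exact_mod_cast (2 * N).factorial_pos)]
  have key := bdfi_nat n N N₂ hN₂N hlow
  have : ((Nat.choose (2 * n) N₂ * Nat.choose (2 * n - N₂) (2 * N - 2 * N₂) *
      (2 * N).factorial : ℕ) : ℝ)
      ≤ ((Nat.choose (2 * N) N₂ * (2 * n) ^ (2 * N - N₂) * (2 * N) ^ N₂ : ℕ) : ℝ) := by
    exact_mod_cast key
  push_cast at this
  calc (Nat.choose (2 * n) N₂ : ℝ) * (Nat.choose (2 * n - N₂) (2 * N - 2 * N₂)) *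
        ((2 * N).factorial : ℝ)
      ≤ (Nat.choose (2 * N) N₂ : ℝ) * (2 * n : ℝ) ^ (2 * N - N₂) * (2 * N : ℝ) ^ N₂ := this
    _ = (Nat.choose (2 * N) N₂ : ℝ) * (2 * n : ℝ) ^ (2 * N - N₂) * (N : ℝ) ^ N₂ * 2 ^ N₂ := by
        rw [show ((2 : ℝ) * N) = 2 * (N : ℝ) by ring, mul_pow]; ring
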